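/- For every m ≥ 0 there exist real polynomials q and q' such that, as polynomial identities in p, p·d_{m-1}(p+1)·d_m(p) + (p+1)·d_{m-1}(p)·d_m(p+1) = q(p² + p) and d_{m-1}(p+1)·d_m(p) - d_{m-1}(p)·d_m(p+1) = q'(p² + p). -/
import Mathlib


open Polynomial

/-- Numerators of the continued fraction `a_1/(p + a_2/(p + ⋯))`, shifted index:
`nseq a (k+1) = n_k`, with `n_{-1} = 1`, `n_0 = 0`, and
`n_k = p·n_{k-1} + a_k·n_{k-2}` for `k ≥ 1`. -/
noncomputable def nseq (a : ℕ → ℝ) : ℕ → Polynomial ℝ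
  | 0 => 1
  | 1 => 0
  | (k+2) => X * nseq a (k+1) + C (a (k+1)) * nseq a k

/-- Denominators of the continued fraction `a_1/(p + a_2/(p + ⋯))`, shifted index:
`dseq a (k+1) = d_k`, with `d_{-1} = 0`, `d_0 = 1`, and
`d_k = p·d_{k-1} + a_k·d_{k-2}` for `k ≥ 1`. -/
noncomputable def dseq (a : ℕ → ℝ) : ℕ → Polynomial ℝ
  | 0 => 0
  | 1 => 1
  | (k+2) => X * dseq a (k+1) + C (a (k+1)) * dseq a k

lemma dseq_comp_succ_succ (a : ℕ → ℝ) (m : ℕ) :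
    (dseq a (m+2)).comp (X + 1) =
      (X + 1) * (dseq a (m+1)).comp (X + 1) + C (a (m+1)) * (dseq a m).comp (X + 1) := by
  show (X * dseq a (m+1) + C (a (m+1)) * dseq a m).comp (X+1) = _
  simp [add_comp, mul_comp, X_comp, C_comp]

lemma key_lemma (a : ℕ → ℝ) (m : ℕ) :
    ∃ qA qT qP qQ : Polynomial ℝ,
      X * (dseq a m).comp (X + 1) * dseq a (m+1)
        + (X + 1) * dseq a m * (dseq a (m+1)).comp (X + 1) = qA.comp (X^2 + X) ∧
      (dseq a m).comp (X + 1) * dseq a (m+1)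
        - dseq a m * (dseq a (m+1)).comp (X + 1) = qT.comp (X^2 + X) ∧
      (dseq a (m+1)).comp (X + 1) * dseq a (m+1) = qP.comp (X^2 + X) ∧
      (dseq a m).comp (X + 1) * dseq a m = qQ.comp (X^2 + X) := by
  induction m with
  | zero =>
    refine ⟨0, 0, 1, 0, ?_, ?_, ?_, ?_⟩ <;>
      simp [dseq, one_comp]
  | succ m ih =>
    obtain ⟨qA, qT, qP, qQ, hA, hT, hP, hQ⟩ := ih
    set c : ℝ := a (m+1)
    refine ⟨(2*X+1) * qP + C c * (qA + qT), -qP - C c * qT,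
            X * qP + C c * qA + (C c)^2 * qQ, qP, ?_, ?_, ?_, hP⟩ <;>
    · simp only [show dseq a (m+2) = X * dseq a (m+1) + C c * dseq a m from rfl,
        add_comp, mul_comp, sub_comp, neg_comp, X_comp, C_comp, one_comp,
        ofNat_comp, pow_comp]
      simp only [← hA, ← hT, ← hP, ← hQ]
      ring

/-- `p·d_{m-1}(p+1)·d_m(p) + (p+1)·d_{m-1}(p)·d_m(p+1)` and
`d_{m-1}(p+1)·d_m(p) - d_{m-1}(p)·d_m(p+1)` are polynomials in `z = p(p+1)`.
Here `d_{m-1} = dseq a m` and `d_m = dseq a (m+1)`. -/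
theorem denominator_combinations_rational_in_z (a : ℕ → ℝ) (m : ℕ) :
    ∃ q q' : Polynomial ℝ,
      X * (dseq a m).comp (X + 1) * dseq a (m+1)
        + (X + 1) * dseq a m * (dseq a (m+1)).comp (X + 1) = q.comp (X^2 + X) ∧
      (dseq a m).comp (X + 1) * dseq a (m+1)
        - dseq a m * (dseq a (m+1)).comp (X + 1) = q'.comp (X^2 + X) := by
  obtain ⟨qA, qT, qP, qQ, hA, hT, _, _⟩ := key_lemma a m
  exact ⟨qA, qT, hA, hT⟩
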